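/- Let n ≥ 2. If [EXT] holds, then S¹ is dense in S for the topology of uniform convergence on compact subsets of 𝔹ⁿ: every f ∈ S is the limit, uniformly on compact subsets of 𝔹ⁿ, of a sequence of maps in S¹ (indeed of the rescalings f_{r_k} for any sequence r_k ∈ (0,1) with r_k → 1). -/

import Mathlib

open Set Metric Filter

noncomputable section

/-- `E n` is `ℂⁿ` with the Euclidean norm. -/
abbrev E (n : ℕ) := EuclideanSpace ℂ (Fin n)

/-- A map is univalent on `D` if it is holomorphic and injective on `D`. -/
def Univalent {n : ℕ} (f : E n → E n) (D : Set (E n)) : Prop :=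
  DifferentiableOn ℂ f D ∧ Set.InjOn f D

/-- The class `S` of normalized univalent maps of the unit ball. -/
def classS (n : ℕ) : Set (E n → E n) :=
  {f | Univalent f (ball 0 1) ∧ f 0 = 0 ∧
    fderiv ℂ f 0 = ContinuousLinearMap.id ℂ (E n)}

/-- The class `S(ℂⁿ)` of normalized entire univalent maps. -/
def classSC (n : ℕ) : Set (E n → E n) :=
  {Ψ | Differentiable ℂ Ψ ∧ Function.Injective Ψ ∧ Ψ 0 = 0 ∧
    fderiv ℂ Ψ 0 = ContinuousLinearMap.id ℂ (E n)}

/-- A normalized Loewner chain on the unit ball. -/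
def IsLoewnerChain {n : ℕ} (f : ℝ → E n → E n) : Prop :=
  ContinuousOn (fun p : ℝ × E n => f p.1 p.2) (Ici 0 ×ˢ ball 0 1) ∧
  (∀ t, 0 ≤ t → Univalent (f t) (ball 0 1)) ∧
  (∀ s t, 0 ≤ s → s ≤ t → f s '' ball 0 1 ⊆ f t '' ball 0 1) ∧
  (∀ t, 0 ≤ t → f t 0 = 0 ∧
    fderiv ℂ (f t) 0 = (Real.exp t : ℂ) • ContinuousLinearMap.id ℂ (E n))

/-- The class `S¹` of maps embedding into a normalized Loewner chain. -/
def classS1 (n : ℕ) : Set (E n → E n) :=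
  {f | f ∈ classS n ∧ ∃ F : ℝ → E n → E n, IsLoewnerChain F ∧
    Set.EqOn (F 0) f (ball 0 1)}

/-- Uniform convergence on all compact subsets of `D`. -/
def ConvUnifOnCompacts {α β : Type*} [TopologicalSpace α] [UniformSpace β]
    (F : ℕ → α → β) (f : α → β) (D : Set α) : Prop :=
  ∀ K, K ⊆ D → IsCompact K → TendstoUniformlyOn F f atTop K

/-- `(D, Ω)` is a Runge pair. -/
def RungePair {n : ℕ} (D Ω : Set (E n)) : Prop :=
  D ⊆ Ω ∧ ∀ h : E n → ℂ, DifferentiableOn ℂ h D →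
    ∃ g : ℕ → E n → ℂ, (∀ k, DifferentiableOn ℂ (g k) Ω) ∧
      ConvUnifOnCompacts g h D

/-- `D` is Runge in `ℂⁿ`. -/
def IsRunge {n : ℕ} (D : Set (E n)) : Prop := RungePair D univ

/-- An automorphism of `ℂⁿ`. -/
def IsAutomorphism {n : ℕ} (Φ : E n → E n) : Prop :=
  Differentiable ℂ Φ ∧ Function.Bijective Φ

/-- A normalized automorphism of `ℂⁿ`. -/
def IsNormalizedAutomorphism {n : ℕ} (Φ : E n → E n) : Prop :=
  IsAutomorphism Φ ∧ Φ 0 = 0 ∧ fderiv ℂ Φ 0 = ContinuousLinearMap.id ℂ (E n)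

/-- `Ω` is biholomorphic to `ℂⁿ`. -/
def BiholToCn {n : ℕ} (Ω : Set (E n)) : Prop :=
  ∃ Ψ : E n → E n, Differentiable ℂ Ψ ∧ Function.Injective Ψ ∧ Set.range Ψ = Ω

/-- A Fatou–Bieberbach domain: a proper subdomain of `ℂⁿ` biholomorphic to `ℂⁿ`. -/
def IsFatouBieberbach {n : ℕ} (Ω : Set (E n)) : Prop :=
  Ω ≠ univ ∧ BiholToCn Ω

/-- The rescaling `f_r(z) = (1/r) f (r z)`. -/
def rescale {n : ℕ} (f : E n → E n) (r : ℝ) (z : E n) : E n :=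
  (r : ℂ)⁻¹ • f ((r : ℂ) • z)

/-- The Loewner range of a chain. -/
def LoewnerRange {n : ℕ} (f : ℝ → E n → E n) : Set (E n) :=
  ⋃ u ∈ Ici (0 : ℝ), f u '' ball 0 1

/-- (AL): the Andersén–Lempert approximation theorem for maps in `S` with Runge image. -/
def AL (n : ℕ) : Prop :=
  ∀ f ∈ classS n, IsRunge (f '' ball 0 1) →
    ∃ Φ : ℕ → E n → E n, (∀ k, IsNormalizedAutomorphism (Φ k)) ∧
      ConvUnifOnCompacts Φ f (ball (0 : E n) 1)

/-- (AL'): every univalent map of the ball with Runge image is approximable by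
automorphisms of `ℂⁿ`. -/
def AL' (n : ℕ) : Prop :=
  ∀ g : E n → E n, Univalent g (ball 0 1) → IsRunge (g '' ball 0 1) →
    ∃ Φ : ℕ → E n → E n, (∀ k, IsAutomorphism (Φ k)) ∧
      ConvUnifOnCompacts Φ g (ball (0 : E n) 1)

/-- (AL-nec): a map in `S` approximable by automorphisms of `ℂⁿ` has Runge image. -/
def ALnec (n : ℕ) : Prop :=
  ∀ f ∈ classS n,
    (∃ Φ : ℕ → E n → E n, (∀ k, IsAutomorphism (Φ k)) ∧
      ConvUnifOnCompacts Φ f (ball (0 : E n) 1)) →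
    IsRunge (f '' ball 0 1)

/-- [GAL]: every `f ∈ S` with non-Runge image is approximable by entire univalent maps. -/
def GAL (n : ℕ) : Prop :=
  ∀ f ∈ classS n, ¬ IsRunge (f '' ball 0 1) →
    ∃ Ψ : ℕ → E n → E n, (∀ k, Differentiable ℂ (Ψ k) ∧ Function.Injective (Ψ k)) ∧
      ConvUnifOnCompacts Ψ f (ball (0 : E n) 1)

/-- [EXT]: every `f ∈ S` extending univalently past the closed ball is in `S¹`. -/
def EXT (n : ℕ) : Prop :=
  ∀ f ∈ classS n,
    (∃ r > (1 : ℝ), ∃ F : E n → E n, Univalent F (ball 0 r) ∧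
      Set.EqOn F f (ball 0 1)) →
    f ∈ classS1 n

/-- [FBR]: every domain biholomorphic to the ball and not Runge in `ℂⁿ` sits in a
Fatou–Bieberbach domain in a Runge way. -/
def FBR (n : ℕ) : Prop :=
  ∀ D : Set (E n), IsOpen D →
    (∃ g : E n → E n, Univalent g (ball 0 1) ∧ g '' ball 0 1 = D) →
    ¬ IsRunge D →
    ∃ Ω : Set (E n), IsFatouBieberbach Ω ∧ D ⊆ Ω ∧ RungePair D Ω

/-- [GALˢ]: strong generalized Andersén–Lempert. -/
def GALs (n : ℕ) : Prop :=
  ∀ f ∈ classS n, ¬ IsRunge (f '' ball 0 1) →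
    ∃ Ω : Set (E n), IsFatouBieberbach Ω ∧
      ∃ Ψ : ℕ → E n → E n, (∀ k, Ψ k ∈ classSC n ∧ Set.range (Ψ k) = Ω) ∧
        ConvUnifOnCompacts Ψ f (ball (0 : E n) 1)

/-- [FBRₐ]. -/
def FBRa (n : ℕ) : Prop :=
  ∀ f ∈ classS n, ∀ r ∈ Ioo (0 : ℝ) 1,
    ∃ Ω : Set (E n), BiholToCn Ω ∧ f '' ball 0 r ⊆ Ω ∧
      RungePair (f '' ball 0 r) Ω

/-- [GALₐˢ]. -/
def GALas (n : ℕ) : Prop :=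
  ∀ f ∈ classS n, ¬ IsRunge (f '' ball 0 1) → ∀ r ∈ Ioo (0 : ℝ) 1,
    ∃ Ω : Set (E n), IsFatouBieberbach Ω ∧
      ∃ Ψ : ℕ → E n → E n, (∀ k, Ψ k ∈ classSC n ∧ Set.range (Ψ k) = Ω) ∧
        ConvUnifOnCompacts Ψ (rescale f r) (ball (0 : E n) 1)

/-- A domain is entire-convexshapelike if some entire univalent map pulls it back to
a convex set. -/
def EntireConvexshapelike {n : ℕ} (Ω : Set (E n)) : Prop :=
  ∃ Ψ : E n → E n, Differentiable ℂ Ψ ∧ Function.Injective Ψ ∧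
    Ω ⊆ Set.range Ψ ∧ Convex ℝ (Ψ ⁻¹' Ω)

/-- `S¹` is dense in `S` for uniform convergence on compacta. -/
def DenseS1 (n : ℕ) : Prop :=
  ∀ f ∈ classS n, ∃ g : ℕ → E n → E n, (∀ k, g k ∈ classS1 n) ∧
    ConvUnifOnCompacts g f (ball (0 : E n) 1)
lemma rescale_univalent {n : ℕ} {f : E n → E n} (hf : f ∈ classS n) {r : ℝ}
    (hr : r ∈ Ioo (0 : ℝ) 1) : Univalent (rescale f r) (ball 0 (1 / r)) := by
  obtain ⟨⟨hdf, hinj⟩, hf0, hDf⟩ := hf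
  have hr0 : (r : ℂ) ≠ 0 := by
    exact_mod_cast Complex.ofReal_ne_zero.mpr (ne_of_gt hr.1)
  have hmap : ∀ z ∈ ball (0 : E n) (1 / r), (r : ℂ) • z ∈ ball (0 : E n) 1 := by
    intro z hz
    rw [mem_ball_zero_iff] at hz ⊢
    rw [norm_smul, Complex.norm_real, Real.norm_eq_abs, abs_of_pos hr.1]
    have := mul_lt_mul_of_pos_left hz hr.1
    rw [mul_one_div, div_self (ne_of_gt hr.1)] at this
    exact this
  constructor
  · refine (?_ : DifferentiableOn ℂ (fun z => f ((r : ℂ) • z)) _).const_smul ((r : ℂ)⁻¹)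
    exact hdf.comp ((differentiable_id.const_smul ((r : ℂ))).differentiableOn) hmap
  · intro z hz w hw h
    have h2 : f ((r : ℂ) • z) = f ((r : ℂ) • w) := by
      have := congrArg (fun v => (r : ℂ) • v) h
      simpa [rescale, smul_smul, mul_inv_cancel₀ hr0] using this
    have := hinj (hmap z hz) (hmap w hw) h2
    exact smul_right_injective _ hr0 this

lemma rescale_classS {n : ℕ} {f : E n → E n} (hf : f ∈ classS n) {r : ℝ}
    (hr : r ∈ Ioo (0 : ℝ) 1) : rescale f r ∈ classS n := by
  have hr0 : (r : ℂ) ≠ 0 := by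
    exact_mod_cast Complex.ofReal_ne_zero.mpr (ne_of_gt hr.1)
  have hsub : ball (0 : E n) 1 ⊆ ball 0 (1 / r) := by
    apply ball_subset_ball
    rw [le_div_iff₀ hr.1, one_mul]
    exact le_of_lt hr.2
  have huni := rescale_univalent hf hr
  refine ⟨⟨huni.1.mono hsub, huni.2.mono hsub⟩, ?_, ?_⟩
  · simp [rescale, hf.2.1]
  · -- fderiv computation
    have h0 : (0 : E n) ∈ ball (0 : E n) 1 := by simp
    have hDAt : DifferentiableAt ℂ f 0 :=
      hf.1.1.differentiableAt (isOpen_ball.mem_nhds h0)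
    have h2 : HasFDerivAt f (ContinuousLinearMap.id ℂ (E n)) 0 := by
      have := hDAt.hasFDerivAt
      rwa [hf.2.2] at this
    have h1 : HasFDerivAt (fun z : E n => (r : ℂ) • z)
        ((r : ℂ) • ContinuousLinearMap.id ℂ (E n)) 0 :=
      (hasFDerivAt_id (0 : E n)).const_smul ((r : ℂ))
    have h3 : HasFDerivAt (fun z : E n => f ((r : ℂ) • z))
        (((ContinuousLinearMap.id ℂ (E n)).comp
          ((r : ℂ) • ContinuousLinearMap.id ℂ (E n)))) 0 := by
      have h2' : HasFDerivAt f (ContinuousLinearMap.id ℂ (E n)) ((r : ℂ) • (0 : E n)) := by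
        simpa using h2
      exact h2'.comp (0 : E n) h1
    have h4 : HasFDerivAt (rescale f r)
        ((r : ℂ)⁻¹ • ((ContinuousLinearMap.id ℂ (E n)).comp
          ((r : ℂ) • ContinuousLinearMap.id ℂ (E n)))) 0 := h3.const_smul ((r : ℂ)⁻¹)
    have heq : ((r : ℂ)⁻¹ • ((ContinuousLinearMap.id ℂ (E n)).comp
          ((r : ℂ) • ContinuousLinearMap.id ℂ (E n))))
        = ContinuousLinearMap.id ℂ (E n) := by
      rw [ContinuousLinearMap.id_comp, smul_smul, inv_mul_cancel₀ hr0, one_smul]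
    rw [heq] at h4
    exact h4.fderiv

lemma rescale_tendsto {n : ℕ} {f : E n → E n} (hf : f ∈ classS n) (r : ℕ → ℝ)
    (hrm : ∀ k, r k ∈ Ioo (0 : ℝ) 1) (hrt : Tendsto r atTop (nhds 1)) :
    ConvUnifOnCompacts (fun k => rescale f (r k)) f (ball (0 : E n) 1) := by
  intro K hK hKc
  rcases K.eq_empty_or_nonempty with rfl | hne
  · exact tendstoUniformlyOn_empty
  obtain ⟨z0, hz0K, hz0'⟩ := hKc.exists_isMaxOn hne continuous_norm.continuousOn
  have hz0 : ∀ z ∈ K, ‖z‖ ≤ ‖z0‖ := fun z hz => hz0' hz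
  set ρ := ‖z0‖ with hρ
  have hρ0 : 0 ≤ ρ := norm_nonneg _
  have hρ1 : ρ < 1 := mem_ball_zero_iff.mp (hK hz0K)
  have hKL : K ⊆ closedBall (0 : E n) ρ := fun z hz =>
    mem_closedBall_zero_iff.mpr (hz0 z hz)
  have hLB : closedBall (0 : E n) ρ ⊆ ball 0 1 := fun w hw =>
    mem_ball_zero_iff.mpr (lt_of_le_of_lt (mem_closedBall_zero_iff.mp hw) hρ1)
  have hcont : ContinuousOn f (closedBall (0 : E n) ρ) :=
    (hf.1.1.continuousOn).mono hLB
  obtain ⟨M, hM⟩ := (isCompact_closedBall (0 : E n) ρ).exists_bound_of_continuousOn hcont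
  set M' := max M 0 with hM'
  have hM'0 : 0 ≤ M' := le_max_right _ _
  have hMb : ∀ w ∈ closedBall (0 : E n) ρ, ‖f w‖ ≤ M' := fun w hw =>
    le_trans (hM w hw) (le_max_left _ _)
  have hu := (isCompact_closedBall (0 : E n) ρ).uniformContinuousOn_of_continuous hcont
  rw [Metric.uniformContinuousOn_iff] at hu
  rw [Metric.tendstoUniformlyOn_iff]
  intro ε hε
  obtain ⟨δ, hδ0, hδ⟩ := hu (ε / 2) (by positivity)
  have h1 : ∀ᶠ k in atTop, 1 - r k < δ := by
    have := (Metric.tendsto_nhds.mp hrt) δ hδ0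
    filter_upwards [this] with k hk
    rw [Real.dist_eq] at hk
    calc 1 - r k ≤ |r k - 1| := by rw [abs_sub_comm]; exact le_abs_self _
    _ < δ := hk
  have h2 : ∀ᶠ k in atTop, 1 / r k - 1 < ε / (2 * (M' + 1)) := by
    have hti : Tendsto (fun k => 1 / r k) atTop (nhds 1) := by
      simpa using (hrt.inv₀ one_ne_zero)
    have := (Metric.tendsto_nhds.mp hti) (ε / (2 * (M' + 1))) (by positivity)
    filter_upwards [this] with k hk
    rw [Real.dist_eq] at hk
    calc 1 / r k - 1 ≤ |1 / r k - 1| := le_abs_self _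
    _ < _ := hk
  filter_upwards [h1, h2] with k hk1 hk2 z hz
  set s := r k with hs
  have hs0 : 0 < s := (hrm k).1
  have hs1 : s < 1 := (hrm k).2
  have hzL : z ∈ closedBall (0 : E n) ρ := hKL hz
  have hzn : ‖z‖ ≤ ρ := mem_closedBall_zero_iff.mp hzL
  have hszL : (s : ℂ) • z ∈ closedBall (0 : E n) ρ := by
    rw [mem_closedBall_zero_iff, norm_smul, Complex.norm_real, Real.norm_eq_abs,
      abs_of_pos hs0]
    nlinarith
  have hterm1 : dist (f z) (f ((s : ℂ) • z)) < ε / 2 := by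
    apply hδ z hzL ((s : ℂ) • z) hszL
    rw [dist_eq_norm]
    have hze : z - (s : ℂ) • z = ((1 - s : ℝ) : ℂ) • z := by
      push_cast; rw [sub_smul, one_smul]
    rw [hze, norm_smul, Complex.norm_real, Real.norm_eq_abs,
      abs_of_nonneg (by linarith : (0:ℝ) ≤ 1 - s)]
    nlinarith
  have hterm2 : dist (f ((s : ℂ) • z)) (rescale f s z) < ε / 2 := by
    have hfw : ‖f ((s : ℂ) • z)‖ ≤ M' := hMb _ hszL
    have hre : rescale f s z = (s : ℂ)⁻¹ • f ((s : ℂ) • z) := rfl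
    rw [hre, dist_eq_norm]
    have he2 : f ((s : ℂ) • z) - (s : ℂ)⁻¹ • f ((s : ℂ) • z)
        = ((1 - 1 / s : ℝ) : ℂ) • f ((s : ℂ) • z) := by
      push_cast; rw [sub_smul, one_smul, one_div]
    rw [he2, norm_smul, Complex.norm_real, Real.norm_eq_abs]
    have h1s : 1 ≤ 1 / s := by
      rw [le_div_iff₀ hs0, one_mul]; exact le_of_lt hs1
    rw [abs_of_nonpos (by linarith : (1 - 1 / s : ℝ) ≤ 0), neg_sub]
    have hkey : (1 / s - 1) * ‖f ((s : ℂ) • z)‖ ≤ (1 / s - 1) * M' :=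
      mul_le_mul_of_nonneg_left hfw (by linarith)
    have hc : ε / (2 * (M' + 1)) * (M' + 1) = ε / 2 := by
      field_simp
    nlinarith [mul_lt_mul_of_pos_right hk2 (by linarith : (0:ℝ) < M' + 1)]
  calc dist (f z) (rescale f (r k) z)
      ≤ dist (f z) (f ((s : ℂ) • z)) + dist (f ((s : ℂ) • z)) (rescale f s z) :=
        dist_triangle _ _ _
    _ < ε / 2 + ε / 2 := add_lt_add hterm1 hterm2
    _ = ε := by ring

/-- [EXT] implies that `S¹` is dense in `S`; indeed, for every `f ∈ S`
and every sequence `r_k ∈ (0,1)` with `r_k → 1` the rescalings `f_{r_k}` lie in `S¹`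
and converge to `f` uniformly on compacta of the ball. -/
theorem stmt4 (n : ℕ) (hn : 2 ≤ n) (hEXT : EXT n) :
    ∀ f ∈ classS n, ∀ r : ℕ → ℝ, (∀ k, r k ∈ Ioo (0 : ℝ) 1) →
      Tendsto r atTop (nhds 1) →
      (∀ k, rescale f (r k) ∈ classS1 n) ∧
      ConvUnifOnCompacts (fun k => rescale f (r k)) f (ball (0 : E n) 1) := by
  intro f hf r hrm hrt
  refine ⟨fun k => ?_, rescale_tendsto hf r hrm hrt⟩
  have hr := hrm k
  apply hEXT _ (rescale_classS hf hr)
  refine ⟨1 / r k, ?_, rescale f (r k), rescale_univalent hf hr, Set.eqOn_refl _ _⟩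
  rw [gt_iff_lt, lt_div_iff₀ hr.1, one_mul]
  exact hr.2
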